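/- V₀ consists exactly of the constant functions: a cyclic equivalence invariant v : W → F is a finite type invariant of degree ≤ 0 if and only if v is constant. In particular dim_F V₀ = 1. -/
import Mathlib


/-- Letters are indexed by natural numbers; a signed letter carries a sign
(`true` = `+`, `false` = `−`). -/
abbrev Letter : Type := ℕ × Bool

/-- A signed word: every entry occurs exactly twice, and the two occurrences of
any letter carry the same sign. -/
def IsSignedWord (w : List Letter) : Prop :=
  ∀ p ∈ w, w.count p = 2 ∧ ∀ q ∈ w, q.1 = p.1 → q.2 = p.2

/-- Signed words (concrete representatives; isomorphism is subsumed by cyclic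
equivalence below). -/
def SignedWord : Type := {w : List Letter // IsSignedWord w}

/-- The set of letters occurring in a list of signed letters. -/
def lettersL (w : List Letter) : Finset ℕ := (w.map Prod.fst).toFinset

/-- The set of letters of a signed word. -/
def SignedWord.letters (w : SignedWord) : Finset ℕ := lettersL w.1

/-- The number of (distinct) letters of a signed word. -/
def SignedWord.numLetters (w : SignedWord) : ℕ := w.letters.card

theorem isSignedWord_filter (q : ℕ → Bool) {w : List Letter} (hw : IsSignedWord w) :
    IsSignedWord (w.filter fun p => q p.1) := by
  intro p hp
  rw [List.mem_filter] at hp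
  refine ⟨?_, fun r hr => (hw p hp.1).2 r (List.mem_filter.mp hr).1⟩
  rw [List.count_filter (p := fun r : Letter => q r.1) hp.2]
  exact (hw p hp.1).1

/-- Delete both occurrences of every letter of `T` from `w`. -/
def SignedWord.delete (w : SignedWord) (T : Finset ℕ) : SignedWord :=
  ⟨w.1.filter fun p => decide (p.1 ∉ T), isSignedWord_filter (fun a => decide (a ∉ T)) w.2⟩

/-- The induced signed subword of `w` on a set `U` of letters. -/
def SignedWord.restrict (w : SignedWord) (U : Finset ℕ) : SignedWord :=
  ⟨w.1.filter fun p => decide (p.1 ∈ U), isSignedWord_filter (fun a => decide (a ∈ U)) w.2⟩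

/-- Sign-preserving relabeling of letters. -/
def Iso (w w' : List Letter) : Prop :=
  ∃ f : ℕ ≃ ℕ, w' = w.map fun p => (f p.1, p.2)

/-- The basic move `A^ε x A^ε y ↦ x A^(−ε) y A^(−ε)`. -/
def Move (w w' : List Letter) : Prop :=
  ∃ (a : ℕ) (s : Bool) (x y : List Letter),
    w = (a, s) :: (x ++ (a, s) :: y) ∧ w' = x ++ (a, !s) :: (y ++ [(a, !s)])

/-- Cyclic equivalence of signed words: the equivalence relation generated by
isomorphism together with the basic move. -/
def CyclicEquivL : List Letter → List Letter → Prop :=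
  Relation.EqvGen fun w w' => Iso w w' ∨ Move w w'

/-- Cyclic equivalence of signed words. -/
def SignedWord.CyclicEquiv (w w' : SignedWord) : Prop := CyclicEquivL w.1 w'.1

/-- A cyclic equivalence invariant with values in `F`. -/
def WordInvariant (F : Type*) [Field F] (v : SignedWord → F) : Prop :=
  ∀ w w' : SignedWord, w.CyclicEquiv w' → v w = v w'

/-- The prolongation of `v` to the singular signed word `(w, S)` (the letters of
`S` being declared singular), given by inclusion–exclusion. -/
def prolong (F : Type*) [Field F] (v : SignedWord → F) (w : SignedWord) (S : Finset ℕ) : F :=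
  ∑ T ∈ S.powerset, (-1 : F) ^ T.card * v (w.delete T)

/-- `v` is a finite type invariant of degree ≤ `n`: it is a cyclic equivalence
invariant whose prolongation vanishes on every singular signed word with more
than `n` singular letters. -/
def FiniteTypeLe (F : Type*) [Field F] (n : ℕ) (v : SignedWord → F) : Prop :=
  WordInvariant F v ∧
    ∀ (w : SignedWord) (S : Finset ℕ), S ⊆ w.letters → n < S.card →
      prolong F v w S = 0

/-- The empty signed word `φ`. -/
def wordEmpty : SignedWord := ⟨[], by intro p hp; simp at hp⟩

/-- The one-letter positive signed word `AA`. -/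
def wordAA : SignedWord := ⟨[(0, true), (0, true)], by unfold IsSignedWord; decide⟩

/-- The one-letter negative signed word `ĀĀ`. -/
def wordAAneg : SignedWord := ⟨[(0, false), (0, false)], by unfold IsSignedWord; decide⟩

/-- The two-letter signed word `AABB`. -/
def wordAABB : SignedWord := ⟨[(0, true), (0, true), (1, true), (1, true)], by unfold IsSignedWord; decide⟩

/-- The two-letter signed word `AAB̄B̄`. -/
def wordAABnBn : SignedWord := ⟨[(0, true), (0, true), (1, false), (1, false)], by unfold IsSignedWord; decide⟩

/-- The two-letter signed word `AB̄B̄A`. -/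
def wordABnBnA : SignedWord := ⟨[(0, true), (1, false), (1, false), (0, true)], by unfold IsSignedWord; decide⟩

/-- The two-letter signed word `ABAB`. -/
def wordABAB : SignedWord := ⟨[(0, true), (1, true), (0, true), (1, true)], by unfold IsSignedWord; decide⟩

/-- The underlying list of the word `A₁A₁A₂A₂…AₙAₙ` (all letters positive). -/
def wListN (n : ℕ) : List Letter := (List.range n).flatMap fun i => [(i, true), (i, true)]

/-- `Ncount u w`: the number of `k`-element subsets of the letters of `w`
(`k` = number of letters of `u`) whose induced signed subword is cyclically
equivalent to (an isomorphic copy of) `u`. -/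
noncomputable def Ncount (u w : SignedWord) : ℕ := by
  classical
  exact (w.letters.powerset.filter fun U =>
    U.card = u.numLetters ∧ (w.restrict U).CyclicEquiv u).card

theorem prolong_add (F : Type*) [Field F] (v₁ v₂ : SignedWord → F) (w : SignedWord) (S : Finset ℕ) :
    prolong F (v₁ + v₂) w S = prolong F v₁ w S + prolong F v₂ w S := by
  simp [prolong, ← Finset.sum_add_distrib, mul_add]

theorem prolong_smul (F : Type*) [Field F] (c : F) (v : SignedWord → F) (w : SignedWord) (S : Finset ℕ) :
    prolong F (c • v) w S = c * prolong F v w S := by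
  rw [prolong, prolong, Finset.mul_sum]
  exact Finset.sum_congr rfl fun T _ => by simp [mul_left_comm]

/-- The `F`-vector space `Vₙ` of finite type invariants of degree ≤ `n`. -/
def Vn (F : Type*) [Field F] (n : ℕ) : Submodule F (SignedWord → F) where
  carrier := {v | FiniteTypeLe F n v}
  add_mem' := by
    rintro v₁ v₂ ⟨h1, h1'⟩ ⟨h2, h2'⟩
    refine ⟨fun w w' h => by simp [h1 w w' h, h2 w w' h], fun w S hS hc => ?_⟩
    rw [prolong_add, h1' w S hS hc, h2' w S hS hc, add_zero]
  zero_mem' := ⟨fun _ _ _ => rfl, fun w S hS hc => by simp [prolong]⟩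
  smul_mem' := by
    rintro c v ⟨h, h'⟩
    refine ⟨fun w w' hww => by simp [h w w' hww], fun w S hS hc => ?_⟩
    rw [prolong_smul, h' w S hS hc, mul_zero]

/-- Cyclic equivalence as a setoid on signed words. -/
def cycSetoid : Setoid SignedWord :=
  ⟨SignedWord.CyclicEquiv, fun w => Relation.EqvGen.refl w.1,
    fun h => Relation.EqvGen.symm _ _ h, fun h h' => Relation.EqvGen.trans _ _ _ h h'⟩


theorem sum_pow_neg_one (F : Type*) [Field F] (S : Finset ℕ) (h : S.Nonempty) :
    ∑ T ∈ S.powerset, (-1 : F) ^ T.card = 0 := by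
  have hZ := Finset.sum_powerset_neg_one_pow_card (x := S)
  rw [if_neg h.ne_empty] at hZ
  have : ((∑ T ∈ S.powerset, (-1 : ℤ) ^ T.card : ℤ) : F) =
      ∑ T ∈ S.powerset, (-1 : F) ^ T.card := by push_cast; rfl
  rw [← this, hZ, Int.cast_zero]

theorem delete_empty (w : SignedWord) : w.delete ∅ = w := by
  apply Subtype.ext
  simp [SignedWord.delete]

theorem letters_delete (w : SignedWord) (T : Finset ℕ) :
    (w.delete T).letters = w.letters \ T := by
  ext a
  simp only [SignedWord.letters, SignedWord.delete, lettersL, List.mem_toFinset,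
    List.mem_map, List.mem_filter, Finset.mem_sdiff, decide_eq_true_eq]
  constructor
  · rintro ⟨p, ⟨hp, hpT⟩, rfl⟩
    exact ⟨⟨p, hp, rfl⟩, hpT⟩
  · rintro ⟨⟨p, hp, rfl⟩, hT⟩
    exact ⟨p, ⟨hp, hT⟩, rfl⟩

theorem const_of_ft0 (F : Type*) [Field F] (v : SignedWord → F)
    (h : ∀ (w : SignedWord) (S : Finset ℕ), S ⊆ w.letters → 0 < S.card →
      prolong F v w S = 0) :
    ∀ w : SignedWord, v w = v wordEmpty := by
  have key : ∀ (n : ℕ) (w : SignedWord), w.letters.card = n → v w = v wordEmpty := by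
    intro n
    induction n using Nat.strong_induction_on with
    | _ n ih =>
      intro w hn
      rcases Nat.eq_zero_or_pos n with h0 | hpos
      · subst h0
        have hlet : w.letters = ∅ := Finset.card_eq_zero.mp hn
        have hnil : w.1 = [] := by
          rw [List.eq_nil_iff_forall_not_mem]
          intro p hp
          have : p.1 ∈ w.letters := by
            simp only [SignedWord.letters, lettersL, List.mem_toFinset, List.mem_map]
            exact ⟨p, hp, rfl⟩
          simp [hlet] at this
        have : w = wordEmpty := Subtype.ext hnil
        rw [this]
      · obtain ⟨a, ha⟩ := Finset.card_pos.mp (hn ▸ hpos)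
        have hsub : ({a} : Finset ℕ) ⊆ w.letters := Finset.singleton_subset_iff.mpr ha
        have hp := h w {a} hsub (by simp)
        have hps : ({a} : Finset ℕ).powerset = {∅, {a}} := by
          ext T
          simp [Finset.mem_powerset, Finset.subset_singleton_iff, Finset.mem_insert]
        rw [prolong, hps,
          Finset.sum_pair (Finset.singleton_ne_empty a).symm] at hp
        simp only [Finset.card_empty, pow_zero, one_mul, Finset.card_singleton, pow_one,
          neg_one_mul, delete_empty] at hp
        have veq : v w = v (w.delete {a}) := by
          rw [← sub_eq_add_neg] at hp
          exact sub_eq_zero.mp hp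
        rw [veq]
        apply ih (n - 1) (by omega) (w.delete {a})
        rw [letters_delete, Finset.card_sdiff_of_subset hsub, hn, Finset.card_singleton]
  exact fun w => key _ w rfl

theorem const_ft0 (F : Type*) [Field F] (c : F) :
    FiniteTypeLe F 0 (fun _ => c) := by
  refine ⟨fun _ _ _ => rfl, fun w S hS hc => ?_⟩
  have hne : S.Nonempty := Finset.card_pos.mp hc
  simp only [prolong, mul_comm, ← Finset.mul_sum]
  rw [sum_pow_neg_one F S hne, mul_zero]

theorem ft0_iff_const (F : Type*) [Field F] (v : SignedWord → F) (hv : WordInvariant F v) :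
    FiniteTypeLe F 0 v ↔ ∃ c : F, ∀ w : SignedWord, v w = c := by
  constructor
  · rintro ⟨_, h⟩
    exact ⟨v wordEmpty, const_of_ft0 F v h⟩
  · rintro ⟨c, hc⟩
    have : v = fun _ => c := funext hc
    rw [this]
    exact const_ft0 F c

/-- `V₀` consists exactly of the constant functions, and
`dim V₀ = 1`. -/
theorem V0_eq_constants (F : Type*) [Field F] :
    (∀ v : SignedWord → F, WordInvariant F v →
      (FiniteTypeLe F 0 v ↔ ∃ c : F, ∀ w : SignedWord, v w = c)) ∧
    Module.finrank F (Vn F 0) = 1 := by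
  refine ⟨fun v hv => ft0_iff_const F v hv, ?_⟩
  have e : (Vn F 0) ≃ₗ[F] F :=
    { toFun := fun v => v.1 wordEmpty
      map_add' := fun _ _ => rfl
      map_smul' := fun _ _ => rfl
      invFun := fun c => ⟨fun _ => c, const_ft0 F c⟩
      left_inv := by
        rintro ⟨v, hv⟩
        apply Subtype.ext
        funext w
        exact (const_of_ft0 F v hv.2 w).symm
      right_inv := fun c => rfl }
  rw [e.finrank_eq, Module.finrank_self]
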